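/- Row homological relation for quasi-determinants: for an N×N matrix A over a ring with the relevant quasi-determinants defined and invertible, and indices s ≠ i, l ≠ j, one has −|A|_{ij} · (|A^{il}|_{sj})⁻¹ = |A|_{il} · (|A^{ij}|_{sl})⁻¹, where A^{ij} denotes A with row i and column j removed. -/

import Mathlib

open Matrix

/-- The Gelfand–Retakh quasi-determinant `|A|_{ij}`:
`|A|_{ij} = a_{ij} − Σ_{k≠j, l≠i} a_{ik} ((A^{ij})⁻¹)_{kl} a_{lj}`,
where `A^{ij}` deletes row `i` and column `j`. -/
noncomputable def quasiDet {R : Type*} [Ring R] {N : ℕ}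
    (A : Matrix (Fin (N + 1)) (Fin (N + 1)) R) (i j : Fin (N + 1)) : R :=
  A i j - ∑ k : Fin N, ∑ l : Fin N,
    A i (j.succAbove k) *
      Ring.inverse (A.submatrix i.succAbove j.succAbove) k l *
      A (i.succAbove l) j

namespace QDAux

variable {R : Type*} [Ring R] {n : ℕ}

/-- The canonical right-kernel vector of `A` with row `i` deleted,
normalized to be `1` at position `j`. -/
noncomputable def kvec (A : Matrix (Fin (n + 1)) (Fin (n + 1)) R) (i j : Fin (n + 1)) :
    Fin (n + 1) → R :=
  j.insertNth 1 fun k =>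
    -(Ring.inverse (A.submatrix i.succAbove j.succAbove) *ᵥ fun m => A (i.succAbove m) j) k

lemma kvec_self (A : Matrix (Fin (n + 1)) (Fin (n + 1)) R) (i j : Fin (n + 1)) :
    kvec A i j j = 1 :=
  Fin.insertNth_apply_same j 1 _

lemma kvec_succAbove (A : Matrix (Fin (n + 1)) (Fin (n + 1)) R) (i j : Fin (n + 1)) (k : Fin n) :
    kvec A i j (j.succAbove k) =
      -(Ring.inverse (A.submatrix i.succAbove j.succAbove) *ᵥ fun m => A (i.succAbove m) j) k :=
  Fin.insertNth_apply_succAbove j 1 _ k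

lemma kern (A : Matrix (Fin (n + 1)) (Fin (n + 1)) R) (i j : Fin (n + 1))
    (h : IsUnit (A.submatrix i.succAbove j.succAbove)) (r : Fin n) :
    ∑ c, A (i.succAbove r) c * kvec A i j c = 0 := by
  rw [Fin.sum_univ_succAbove _ j, kvec_self, mul_one]
  have key : ∑ k, A (i.succAbove r) (j.succAbove k) *
      (Ring.inverse (A.submatrix i.succAbove j.succAbove) *ᵥ fun m => A (i.succAbove m) j) k
      = A (i.succAbove r) j := by
    have : (A.submatrix i.succAbove j.succAbove *ᵥ
        (Ring.inverse (A.submatrix i.succAbove j.succAbove) *ᵥ fun m => A (i.succAbove m) j)) r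
        = A (i.succAbove r) j := by
      rw [mulVec_mulVec, Ring.mul_inverse_cancel _ h, one_mulVec]
    simpa [mulVec, dotProduct] using this
  simp only [kvec_succAbove, mul_neg, Finset.sum_neg_distrib, key, add_neg_cancel]

lemma qd (A : Matrix (Fin (n + 1)) (Fin (n + 1)) R) (i j : Fin (n + 1)) :
    quasiDet A i j = ∑ c, A i c * kvec A i j c := by
  rw [Fin.sum_univ_succAbove _ j, kvec_self, mul_one, quasiDet]
  simp only [kvec_succAbove, mul_neg, Finset.sum_neg_distrib, mulVec, dotProduct,
    Finset.mul_sum, ← mul_assoc, submatrix_apply, sub_eq_add_neg]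

end QDAux

open QDAux in
/-- row homological relation for quasi-determinants.  For an
`N×N` matrix `A` with the relevant quasi-determinants defined and invertible,
and indices `s ≠ i`, `l ≠ j`, one has
`−|A|_{ij} · (|A^{il}|_{sj})⁻¹ = |A|_{il} · (|A^{ij}|_{sl})⁻¹`.
Here the row `s ≠ i` is encoded as `i.succAbove s`, the column `j` within
`A^{il}` is encoded by `jd` with `l.succAbove jd = j` (hence `j ≠ l`), and the
column `l` within `A^{ij}` by `ld` with `j.succAbove ld = l`. -/
theorem stmt11 {R : Type*} [Ring R] {N : ℕ}
    (A : Matrix (Fin (N + 2)) (Fin (N + 2)) R)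
    (i j l : Fin (N + 2)) (s jd ld : Fin (N + 1))
    (hjd : l.succAbove jd = j) (hld : j.succAbove ld = l)
    (h1 : IsUnit (A.submatrix i.succAbove j.succAbove))
    (h2 : IsUnit (A.submatrix i.succAbove l.succAbove))
    (h3 : IsUnit ((A.submatrix i.succAbove l.succAbove).submatrix
      s.succAbove jd.succAbove))
    (h4 : IsUnit ((A.submatrix i.succAbove j.succAbove).submatrix
      s.succAbove ld.succAbove))
    (h5 : IsUnit (quasiDet (A.submatrix i.succAbove l.succAbove) s jd))
    (h6 : IsUnit (quasiDet (A.submatrix i.succAbove j.succAbove) s ld)) :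
    -(quasiDet A i j *
        Ring.inverse (quasiDet (A.submatrix i.succAbove l.succAbove) s jd))
      = quasiDet A i l *
          Ring.inverse (quasiDet (A.submatrix i.succAbove j.succAbove) s ld) := by
  set A1 := A.submatrix i.succAbove l.succAbove with hA1
  set A2 := A.submatrix i.succAbove j.succAbove with hA2
  set y1 := kvec A i j with hy1
  set y2 := kvec A i l with hy2
  set z1 : Fin (N + 2) → R := l.insertNth 0 (kvec A1 s jd) with hz1
  set z2 : Fin (N + 2) → R := j.insertNth 0 (kvec A2 s ld) with hz2
  set D1 := quasiDet A1 s jd with hD1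
  set D2 := quasiDet A2 s ld with hD2
  set e1 := ∑ c, A i c * z1 c with he1
  set e2 := ∑ c, A i c * z2 c with he2
  -- boundary values
  have hz1l : z1 l = 0 := Fin.insertNth_apply_same l 0 _
  have hz1j : z1 j = 1 := by
    rw [← hjd, hz1, Fin.insertNth_apply_succAbove, kvec_self]
  have hz2j : z2 j = 0 := Fin.insertNth_apply_same j 0 _
  have hz2l : z2 l = 1 := by
    rw [← hld, hz2, Fin.insertNth_apply_succAbove, kvec_self]
  have hy1j : y1 j = 1 := kvec_self A i j
  have hy2l : y2 l = 1 := kvec_self A i l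
  -- kernel properties
  have hy1ker : ∀ r : Fin (N + 1), ∑ c, A (i.succAbove r) c * y1 c = 0 := kern A i j h1
  have hy2ker : ∀ r : Fin (N + 1), ∑ c, A (i.succAbove r) c * y2 c = 0 := kern A i l h2
  have hz1ker : ∀ r : Fin N, ∑ c, A (i.succAbove (s.succAbove r)) c * z1 c = 0 := by
    intro r
    rw [Fin.sum_univ_succAbove _ l, hz1l, mul_zero, zero_add]
    simp only [hz1, Fin.insertNth_apply_succAbove]
    exact kern A1 s jd h3 r
  have hz2ker : ∀ r : Fin N, ∑ c, A (i.succAbove (s.succAbove r)) c * z2 c = 0 := by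
    intro r
    rw [Fin.sum_univ_succAbove _ j, hz2j, mul_zero, zero_add]
    simp only [hz2, Fin.insertNth_apply_succAbove]
    exact kern A2 s ld h4 r
  -- pairings with row `s` of the matrix with row `i` deleted
  have hpz1 : ∑ c, A (i.succAbove s) c * z1 c = D1 := by
    rw [Fin.sum_univ_succAbove _ l, hz1l, mul_zero, zero_add]
    simp only [hz1, Fin.insertNth_apply_succAbove]
    exact (qd A1 s jd).symm
  have hpz2 : ∑ c, A (i.succAbove s) c * z2 c = D2 := by
    rw [Fin.sum_univ_succAbove _ j, hz2j, mul_zero, zero_add]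
    simp only [hz2, Fin.insertNth_apply_succAbove]
    exact (qd A2 s ld).symm
  -- kernel vectors of the matrix with rows `i`, `i.succAbove s` deleted are
  -- determined by their values at `j` and `l`
  have huniq : ∀ d : Fin (N + 2) → R,
      (∀ r : Fin N, ∑ c, A (i.succAbove (s.succAbove r)) c * d c = 0) →
      d j = 0 → d l = 0 → ∀ c, d c = 0 := by
    intro d hker hj hl
    have hQ : A1.submatrix s.succAbove jd.succAbove *ᵥ
        (fun k => d (l.succAbove (jd.succAbove k))) = 0 := by
      funext r
      have h0 := hker r
      rw [Fin.sum_univ_succAbove _ l, hl, mul_zero, zero_add,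
        Fin.sum_univ_succAbove (fun k => A (i.succAbove (s.succAbove r)) (l.succAbove k) *
          d (l.succAbove k)) jd, hjd, hj, mul_zero, zero_add] at h0
      simpa [mulVec, dotProduct, hA1] using h0
    have hv : ∀ k, d (l.succAbove (jd.succAbove k)) = 0 := by
      have h0 : (fun k => d (l.succAbove (jd.succAbove k))) = 0 := by
        calc (fun k => d (l.succAbove (jd.succAbove k)))
            = (1 : Matrix (Fin N) (Fin N) R) *ᵥ (fun k => d (l.succAbove (jd.succAbove k))) := by
              rw [one_mulVec]
          _ = Ring.inverse (A1.submatrix s.succAbove jd.succAbove) *ᵥ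
                (A1.submatrix s.succAbove jd.succAbove *ᵥ
                  (fun k => d (l.succAbove (jd.succAbove k)))) := by
              rw [mulVec_mulVec, Ring.inverse_mul_cancel _ h3]
          _ = 0 := by rw [hQ, mulVec_zero]
      intro k; exact congrFun h0 k
    intro c
    by_cases hcl : c = l
    · rw [hcl]; exact hl
    · obtain ⟨m, hm⟩ := Fin.exists_succAbove_eq hcl
      by_cases hmj : m = jd
      · rw [← hm, hmj, hjd]; exact hj
      · obtain ⟨k, hk⟩ := Fin.exists_succAbove_eq hmj
        rw [← hm, ← hk]; exact hv k
  -- decompose y1 and y2 in the basis (z1, z2)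
  have key1 : ∀ c, y1 c = z1 c + z2 c * y1 l := by
    have h0 := huniq (fun c => y1 c - (z1 c + z2 c * y1 l)) ?_ ?_ ?_
    · intro c
      have := h0 c
      simpa [sub_eq_zero] using this
    · intro r
      simp only [mul_sub, mul_add, Finset.sum_sub_distrib, Finset.sum_add_distrib, ← mul_assoc,
        ← Finset.sum_mul]
      rw [hy1ker (s.succAbove r), hz1ker r, hz2ker r, zero_mul, add_zero, sub_zero]
    · simp [hy1j, hz1j, hz2j]
    · simp [hz1l, hz2l]
  have key2 : ∀ c, y2 c = z1 c * y2 j + z2 c := by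
    have h0 := huniq (fun c => y2 c - (z1 c * y2 j + z2 c)) ?_ ?_ ?_
    · intro c
      have := h0 c
      simpa [sub_eq_zero] using this
    · intro r
      simp only [mul_sub, mul_add, Finset.sum_sub_distrib, Finset.sum_add_distrib, ← mul_assoc,
        ← Finset.sum_mul]
      rw [hy2ker (s.succAbove r), hz1ker r, hz2ker r, zero_mul, add_zero, sub_zero]
    · simp [hz1j, hz2j, hy1j]
    · simp [hy2l, hz1l, hz2l]
  -- quasi-determinants of A as pairings
  have hq1 : quasiDet A i j = e1 + e2 * y1 l := by
    rw [qd A i j]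
    calc ∑ c, A i c * kvec A i j c = ∑ c, A i c * (z1 c + z2 c * y1 l) := by
          refine Finset.sum_congr rfl fun c _ => ?_
          rw [← key1 c]
      _ = e1 + e2 * y1 l := by
          simp only [mul_add, Finset.sum_add_distrib, ← mul_assoc, ← Finset.sum_mul, he1, he2]
  have hq2 : quasiDet A i l = e1 * y2 j + e2 := by
    rw [qd A i l]
    calc ∑ c, A i c * kvec A i l c = ∑ c, A i c * (z1 c * y2 j + z2 c) := by
          refine Finset.sum_congr rfl fun c _ => ?_
          rw [← key2 c]
      _ = e1 * y2 j + e2 := by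
          simp only [mul_add, Finset.sum_add_distrib, ← mul_assoc, ← Finset.sum_mul, he1, he2]
  -- the homological relations at row s
  have hrel1 : D1 + D2 * y1 l = 0 := by
    have h0 := hy1ker s
    calc D1 + D2 * y1 l = ∑ c, A (i.succAbove s) c * (z1 c + z2 c * y1 l) := by
          simp only [mul_add, Finset.sum_add_distrib, ← mul_assoc, ← Finset.sum_mul, hpz1, hpz2]
      _ = ∑ c, A (i.succAbove s) c * y1 c := by
          refine Finset.sum_congr rfl fun c _ => ?_
          rw [← key1 c]
      _ = 0 := h0
  have hrel2 : D1 * y2 j + D2 = 0 := by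
    have h0 := hy2ker s
    calc D1 * y2 j + D2 = ∑ c, A (i.succAbove s) c * (z1 c * y2 j + z2 c) := by
          simp only [mul_add, Finset.sum_add_distrib, ← mul_assoc, ← Finset.sum_mul, hpz1, hpz2]
      _ = ∑ c, A (i.succAbove s) c * y2 c := by
          refine Finset.sum_congr rfl fun c _ => ?_
          rw [← key2 c]
      _ = 0 := h0
  -- solve for y1 l and y2 j
  have hy1l : y1 l = -(Ring.inverse D2 * D1) := by
    have h0 : D2 * y1 l = -D1 := by linear_combination (norm := noncomm_ring) hrel1
    have := congrArg (Ring.inverse D2 * ·) h0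
    simpa [Ring.inverse_mul_cancel_left _ _ h6] using this
  have hy2j : y2 j = -(Ring.inverse D1 * D2) := by
    have h0 : D1 * y2 j = -D2 := by linear_combination (norm := noncomm_ring) hrel2
    have := congrArg (Ring.inverse D1 * ·) h0
    simpa [Ring.inverse_mul_cancel_left _ _ h5] using this
  -- final computation
  rw [hq1, hq2, hy1l, hy2j]
  have c1 : D1 * Ring.inverse D1 = 1 := Ring.mul_inverse_cancel _ h5
  have c2 : D2 * Ring.inverse D2 = 1 := Ring.mul_inverse_cancel _ h6
  calc -((e1 + e2 * -(Ring.inverse D2 * D1)) * Ring.inverse D1)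
      = -(e1 * Ring.inverse D1) + e2 * Ring.inverse D2 * (D1 * Ring.inverse D1) := by
        noncomm_ring
    _ = -(e1 * Ring.inverse D1) + e2 * Ring.inverse D2 := by rw [c1, mul_one]
    _ = -(e1 * Ring.inverse D1 * (D2 * Ring.inverse D2)) + e2 * Ring.inverse D2 := by
        rw [c2, mul_one]
    _ = (e1 * -(Ring.inverse D1 * D2) + e2) * Ring.inverse D2 := by noncomm_ring
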